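/- Let W(i) and W(k) be degenerate U-statistics in L⁴(P) of orders p_i and p_k, respectively, in the same independent sequence X_1,…,X_n, with Hoeffding components W_J(i) (J ∈ 𝓓_{p_i}) and W_K(k) (K ∈ 𝓓_{p_k}). Then for all J ∈ 𝓓_{p_i} and K ∈ 𝓓_{p_k}: E[ ( E[ W_J(i)·W_K(k) | 𝓕_{JΔK} ] )² ] ≤ σ_J(i)²·σ_K(k)², where JΔK = (J∖K) ∪ (K∖J) is the symmetric difference. -/

import Mathlib

open MeasureTheory ProbabilityTheory Finset Filter

noncomputable section

/-! ### Auxiliary general lemmas -/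

section Aux

variable {Ω : Type*} {m0 : MeasurableSpace Ω} {μ : Measure Ω}

/-- Pointwise quadratic discriminant lemma. -/
lemma sq_le_of_forall_rat {a b c : ℝ} (h : ∀ q : ℚ, 0 ≤ a + 2 * q * b + q ^ 2 * c) :
    b ^ 2 ≤ a * c := by
  have hall : ∀ x : ℝ, 0 ≤ c * (x * x) + (2 * b) * x + a := by
    have hclosed : IsClosed {x : ℝ | 0 ≤ c * (x * x) + (2 * b) * x + a} :=
      isClosed_le continuous_const (by fun_prop)
    have hsub : Set.range ((↑) : ℚ → ℝ) ⊆ {x : ℝ | 0 ≤ c * (x * x) + (2 * b) * x + a} := by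
      rintro _ ⟨q, rfl⟩
      simp only [Set.mem_setOf_eq]
      nlinarith [h q]
    have hdense : closure (Set.range ((↑) : ℚ → ℝ)) = Set.univ :=
      Rat.denseRange_cast.closure_eq
    intro x
    have : x ∈ closure (Set.range ((↑) : ℚ → ℝ)) := by rw [hdense]; trivial
    exact hclosed.closure_subset_iff.2 hsub this
  have := discrim_le_zero hall
  rw [discrim] at this
  nlinarith [this]

lemma integrable_mul_of_memL2 {f g : Ω → ℝ} (hf : MemLp f 2 μ) (hg : MemLp g 2 μ) :
    Integrable (fun ω => f ω * g ω) μ := by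
  refine ((hf.integrable_sq.add hg.integrable_sq).div_const 2).mono'
    (hf.aestronglyMeasurable.mul hg.aestronglyMeasurable) (Eventually.of_forall fun ω => ?_)
  simp only [Pi.add_apply, Real.norm_eq_abs, abs_mul]
  nlinarith [sq_nonneg (|f ω| - |g ω|), sq_abs (f ω), sq_abs (g ω)]

/-- Conditional Cauchy-Schwarz inequality. -/
lemma condexp_mul_sq_le {m : MeasurableSpace Ω} [IsProbabilityMeasure μ]
    {f g : Ω → ℝ} (hf : MemLp f 2 μ) (hg : MemLp g 2 μ) :
    ∀ᵐ ω ∂μ, ((μ[fun ω' => f ω' * g ω'|m]) ω) ^ 2 ≤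
      (μ[fun ω' => f ω' ^ 2|m]) ω * (μ[fun ω' => g ω' ^ 2|m]) ω := by
  have hfg_int : Integrable (fun ω => f ω * g ω) μ := integrable_mul_of_memL2 hf hg
  have hf2_int : Integrable (fun ω => f ω ^ 2) μ := hf.integrable_sq
  have hg2_int : Integrable (fun ω => g ω ^ 2) μ := hg.integrable_sq
  have hq : ∀ q : ℚ, ∀ᵐ ω ∂μ, 0 ≤ (μ[fun ω' => f ω' ^ 2|m]) ω
      + 2 * q * (μ[fun ω' => f ω' * g ω'|m]) ω
      + (q : ℝ) ^ 2 * (μ[fun ω' => g ω' ^ 2|m]) ω := by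
    intro q
    have hnn : 0 ≤ᵐ[μ] μ[fun ω' => (f ω' + q * g ω') ^ 2|m] :=
      condExp_nonneg (Eventually.of_forall fun ω => sq_nonneg _)
    have hFq : (fun ω' => (f ω' + q * g ω') ^ 2)
        = (fun ω' => f ω' ^ 2) + ((2 * q : ℝ) • fun ω' => f ω' * g ω')
          + ((q : ℝ) ^ 2 • fun ω' => g ω' ^ 2) := by
      funext ω
      simp only [Pi.add_apply, Pi.smul_apply, smul_eq_mul]
      ring
    have h1 : μ[fun ω' => (f ω' + q * g ω') ^ 2|m] =ᵐ[μ]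
        μ[fun ω' => f ω' ^ 2|m] + (2 * q : ℝ) • μ[fun ω' => f ω' * g ω'|m]
          + (q : ℝ) ^ 2 • μ[fun ω' => g ω' ^ 2|m] := by
      rw [hFq]
      refine (condExp_add (hf2_int.add (hfg_int.smul ((2 : ℝ) * q)))
        (hg2_int.smul ((q : ℝ) ^ 2)) m).trans ?_
      refine EventuallyEq.add (EventuallyEq.trans
        (condExp_add hf2_int (hfg_int.smul ((2 : ℝ) * q)) m) ?_) (condExp_smul _ _ m)
      exact EventuallyEq.add EventuallyEq.rfl (condExp_smul _ _ m)
    filter_upwards [hnn, h1] with ω h0 heq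
    simp only [Pi.add_apply, Pi.smul_apply, smul_eq_mul] at heq
    rw [heq] at h0
    simpa using h0
  have hall : ∀ᵐ ω ∂μ, ∀ q : ℚ, 0 ≤ (μ[fun ω' => f ω' ^ 2|m]) ω
      + 2 * q * (μ[fun ω' => f ω' * g ω'|m]) ω
      + (q : ℝ) ^ 2 * (μ[fun ω' => g ω' ^ 2|m]) ω := ae_all_iff.2 hq
  filter_upwards [hall] with ω hω
  exact sq_le_of_forall_rat hω

/-- Conditional Jensen inequality for squares. -/
lemma sq_condexp_le_condexp_sq {m : MeasurableSpace Ω} [IsProbabilityMeasure μ] (hm : m ≤ m0)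
    {f : Ω → ℝ} (hf : MemLp f 2 μ) :
    ∀ᵐ ω ∂μ, ((μ[f|m]) ω) ^ 2 ≤ (μ[fun ω' => f ω' ^ 2|m]) ω := by
  have h := condexp_mul_sq_le (m := m) (μ := μ) hf (memLp_const (1 : ℝ))
  have h1 : (μ[fun ω' => f ω' * (fun _ => (1:ℝ)) ω'|m]) =ᵐ[μ] μ[f|m] := by
    refine condExp_congr_ae (Eventually.of_forall fun ω => ?_)
    simp
  have h2 : (μ[fun ω' => ((fun _ => (1:ℝ)) ω') ^ 2|m]) =ᵐ[μ] fun _ => (1 : ℝ) := by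
    have he : (fun ω' : Ω => ((fun _ : Ω => (1:ℝ)) ω') ^ 2) = fun _ : Ω => (1:ℝ) := by
      funext ω; simp
    rw [he, condExp_const hm]
  filter_upwards [h, h1, h2] with ω hω e1 e2
  calc ((μ[f|m]) ω) ^ 2 = ((μ[fun ω' => f ω' * (fun _ => (1:ℝ)) ω'|m]) ω) ^ 2 := by rw [e1]
    _ ≤ (μ[fun ω' => f ω' ^ 2|m]) ω * (μ[fun ω' => ((fun _ => (1:ℝ)) ω') ^ 2|m]) ω := hω
    _ = (μ[fun ω' => f ω' ^ 2|m]) ω := by rw [e2]; simp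

/-- The conditional expectation of an `L²` function is in `L²`. -/
lemma memL2_condexp {m : MeasurableSpace Ω} [IsProbabilityMeasure μ] (hm : m ≤ m0)
    {f : Ω → ℝ} (hf : MemLp f 2 μ) : MemLp (μ[f|m]) 2 μ := by
  refine (memLp_two_iff_integrable_sq
    ((stronglyMeasurable_condExp.mono hm).aestronglyMeasurable)).2 ?_
  have hsm : StronglyMeasurable[m0] (fun ω => (μ[f|m]) ω ^ 2) := by
    have h : StronglyMeasurable[m0] (μ[f|m]) := stronglyMeasurable_condExp.mono hm
    simpa [pow_two, Pi.mul_def] using h.mul h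
  refine Integrable.mono' (integrable_condExp (m := m) (f := fun ω' => f ω' ^ 2))
    hsm.aestronglyMeasurable ?_
  filter_upwards [sq_condexp_le_condexp_sq hm hf] with ω h
  rw [Real.norm_eq_abs, abs_of_nonneg (sq_nonneg _)]
  exact h

end Aux

/-- If `m₂` is independent of `m₁` and `f` is `m₁`-measurable with `m₃ ≤ m₁`, then
conditioning on `m₂ ⊔ m₃` is the same as conditioning on `m₃`. -/
lemma condexp_sup_eq {Ω : Type*} {m₁ m₂ m₃ m0 : MeasurableSpace Ω} {μ : Measure Ω}
    [IsProbabilityMeasure μ]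
    (hle₁ : m₁ ≤ m0) (hle₂ : m₂ ≤ m0) (hle₃ : m₃ ≤ m₁)
    (hindep : Indep m₁ m₂ μ) {f : Ω → ℝ}
    (hfm : StronglyMeasurable[m₁] f) (hfint : Integrable f μ) :
    μ[f | m₂ ⊔ m₃] =ᵐ[μ] μ[f | m₃] := by
  have hm3 : m₃ ≤ m0 := hle₃.trans hle₁
  have hm : m₂ ⊔ m₃ ≤ m0 := sup_le hle₂ hm3
  -- the π-system of intersections
  set 𝒞 : Set (Set Ω) :=
    {t | ∃ t₂ t₃, MeasurableSet[m₂] t₂ ∧ MeasurableSet[m₃] t₃ ∧ t = t₂ ∩ t₃} with h𝒞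
  have h_pi : IsPiSystem 𝒞 := by
    rintro u ⟨a₂, a₃, ha₂, ha₃, rfl⟩ v ⟨b₂, b₃, hb₂, hb₃, rfl⟩ _
    refine ⟨a₂ ∩ b₂, a₃ ∩ b₃, ha₂.inter hb₂, ha₃.inter hb₃, ?_⟩
    ext ω; simp only [Set.mem_inter_iff]; tauto
  have h_gen : (m₂ ⊔ m₃ : MeasurableSpace Ω) = MeasurableSpace.generateFrom 𝒞 := by
    refine le_antisymm (sup_le ?_ ?_) (MeasurableSpace.generateFrom_le ?_)
    · intro t ht
      exact MeasurableSpace.measurableSet_generateFrom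
        ⟨t, Set.univ, ht, MeasurableSet.univ, (Set.inter_univ t).symm⟩
    · intro t ht
      exact MeasurableSpace.measurableSet_generateFrom
        ⟨Set.univ, t, MeasurableSet.univ, ht, (Set.univ_inter t).symm⟩
    · rintro u ⟨t₂, t₃, ht₂, ht₃, rfl⟩
      exact ((le_sup_left : m₂ ≤ m₂ ⊔ m₃) _ ht₂).inter ((le_sup_right : m₃ ≤ m₂ ⊔ m₃) _ ht₃)
  -- key computation for m₁-measurable integrable functions on basic rectangles
  have key : ∀ (h : Ω → ℝ), StronglyMeasurable[m₁] h → Integrable h μ →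
      ∀ t₂ t₃, MeasurableSet[m₂] t₂ → MeasurableSet[m₃] t₃ →
      ∫ x in t₂ ∩ t₃, h x ∂μ = (μ t₂).toReal * ∫ x in t₃, h x ∂μ := by
    intro h hsm hint t₂ t₃ ht₂ ht₃
    have hIF : IndepFun (t₃.indicator h) (t₂.indicator (fun _ => (1 : ℝ))) μ := by
      have h1 : Measurable[m₁] (t₃.indicator h) :=
        (hsm.measurable).indicator (hle₃ _ ht₃)
      have h2 : Measurable[m₂] (t₂.indicator (fun _ => (1 : ℝ))) :=
        measurable_const.indicator ht₂
      exact indep_of_indep_of_le_right (indep_of_indep_of_le_left hindep h1.comap_le)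
        h2.comap_le
    have hint3 : Integrable (t₃.indicator h) μ := hint.indicator (hm3 _ ht₃)
    have hint2 : Integrable (t₂.indicator (fun _ => (1 : ℝ))) μ :=
      (integrable_const _).indicator (hle₂ _ ht₂)
    have hmul := hIF.integral_mul_eq_mul_integral hint3.aestronglyMeasurable hint2.aestronglyMeasurable
    have hprod : (t₃.indicator h) * (t₂.indicator (fun _ => (1 : ℝ)))
        = (t₂ ∩ t₃).indicator h := by
      funext ω
      by_cases h2 : ω ∈ t₂ <;> by_cases h3 : ω ∈ t₃ <;>
        simp [Set.indicator_apply, h2, h3, Set.mem_inter_iff]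
    rw [hprod] at hmul
    rw [← integral_indicator ((hle₂ _ ht₂).inter (hm3 _ ht₃)), hmul,
      integral_indicator (hm3 _ ht₃), integral_indicator (hle₂ _ ht₂)]
    simp [mul_comm, measureReal_def]
  -- set integral equality on all of m₂ ⊔ m₃
  have h_eq : ∀ s, MeasurableSet[m₂ ⊔ m₃] s →
      ∫ x in s, (μ[f|m₃]) x ∂μ = ∫ x in s, f x ∂μ := by
    have hgm : StronglyMeasurable[m₁] (μ[f|m₃]) := stronglyMeasurable_condExp.mono hle₃
    have hgint : Integrable (μ[f|m₃]) μ := integrable_condExp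
    intro s hs
    refine MeasurableSpace.induction_on_inter (m := m₂ ⊔ m₃) (C := fun s _ =>
        ∫ x in s, (μ[f|m₃]) x ∂μ = ∫ x in s, f x ∂μ) h_gen h_pi (by simp) ?_ ?_ ?_ s hs
    · rintro u ⟨t₂, t₃, ht₂, ht₃, rfl⟩
      rw [key _ hgm hgint t₂ t₃ ht₂ ht₃, key _ hfm hfint t₂ t₃ ht₂ ht₃,
        setIntegral_condExp hm3 hfint ht₃]
    · intro t htm ht
      have htm0 : MeasurableSet t := hm _ htm
      have h1 := integral_add_compl htm0 hgint
      have h2 := integral_add_compl htm0 hfint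
      have h3 : ∫ x, (μ[f|m₃]) x ∂μ = ∫ x, f x ∂μ := integral_condExp hm3
      linarith
    · intro g hdisj hgm' hC
      have hg0 : ∀ i, MeasurableSet (g i) := fun i => hm _ (hgm' i)
      rw [integral_iUnion hg0 hdisj hgint.integrableOn,
        integral_iUnion hg0 hdisj hfint.integrableOn]
      exact tsum_congr hC
  refine (ae_eq_condExp_of_forall_setIntegral_eq hm hfint
    (fun s _ _ => integrable_condExp.integrableOn)
    (fun s hs _ => h_eq s hs)
    (StronglyMeasurable.aestronglyMeasurable
      (stronglyMeasurable_condExp.mono le_sup_right))).symm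

/-! ### The given definitions (verbatim) -/

/-- The σ-algebra generated by the random variables `X j`, `j ∈ J`. -/
def sigmaGen {Ω : Type*} {n : ℕ} {E : Fin n → Type*} [∀ i, MeasurableSpace (E i)]
    (X : ∀ i, Ω → E i) (J : Finset (Fin n)) : MeasurableSpace Ω :=
  ⨆ i ∈ J, MeasurableSpace.comap (X i) inferInstance

/-- The Hoeffding component of `W` indexed by `J`:
`W_J = ∑_{L ⊆ J} (-1)^{|J|-|L|} E[W | 𝓕_L]`. -/
noncomputable def hoeff {Ω : Type*} [MeasurableSpace Ω] {n : ℕ} {E : Fin n → Type*}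
    [∀ i, MeasurableSpace (E i)] (μ : Measure Ω) (X : ∀ i, Ω → E i)
    (W : Ω → ℝ) (J : Finset (Fin n)) : Ω → ℝ :=
  ∑ L ∈ J.powerset, ((-1 : ℝ) ^ (J.card - L.card)) • μ[W | sigmaGen X L]

/-- The collection `𝓓_d` of all `d`-subsets of `{1,…,n}`. -/
def DD (n d : ℕ) : Finset (Finset (Fin n)) :=
  Finset.univ.filter fun J => J.card = d

/-- `W` is a degenerate U-statistic of order `d` (w.r.t. the data `X`): its Hoeffding
decomposition is `W = ∑_{J ∈ 𝓓_d} W_J`. -/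
def IsDegenUStat {Ω : Type*} [MeasurableSpace Ω] {n : ℕ} {E : Fin n → Type*}
    [∀ i, MeasurableSpace (E i)] (μ : Measure Ω) (X : ∀ i, Ω → E i)
    (W : Ω → ℝ) (d : ℕ) : Prop :=
  W =ᵐ[μ] fun ω => ∑ J ∈ DD n d, hoeff μ X W J ω

/-- The influence quantity `ρ_n² = max_{1 ≤ i ≤ n} ∑_{J ∈ 𝓓_d, i ∈ J} Var(W_J)`. -/
noncomputable def rho2 {Ω : Type*} [MeasurableSpace Ω] {n : ℕ} {E : Fin n → Type*}
    [∀ i, MeasurableSpace (E i)] (μ : Measure Ω) (X : ∀ i, Ω → E i)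
    (W : Ω → ℝ) (d : ℕ) : ℝ :=
  ⨆ i : Fin n, ∑ J ∈ (DD n d).filter (fun J => i ∈ J), variance (hoeff μ X W J) μ

/-! ### Lemmas about `sigmaGen` and `hoeff` -/

section SigmaGenLemmas

variable {Ω : Type*} {n : ℕ} {E : Fin n → Type*} [∀ i, MeasurableSpace (E i)]
  {m0 : MeasurableSpace Ω} {μ : Measure Ω} {X : ∀ i, Ω → E i}

lemma sigmaGen_le (hX : ∀ i, Measurable (X i)) (S : Finset (Fin n)) :
    sigmaGen X S ≤ m0 :=
  iSup₂_le fun i _ => (hX i).comap_le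

lemma sigmaGen_mono {S T : Finset (Fin n)} (h : S ⊆ T) :
    sigmaGen (Ω := Ω) X S ≤ sigmaGen X T :=
  biSup_mono fun _ hi => h hi

lemma sigmaGen_union (S T : Finset (Fin n)) :
    sigmaGen (Ω := Ω) X (S ∪ T) = sigmaGen X S ⊔ sigmaGen X T := by
  apply le_antisymm
  · refine iSup₂_le fun i hi => ?_
    rcases Finset.mem_union.1 hi with h | h
    · exact le_sup_of_le_left
        (le_iSup₂ (f := fun i (_ : i ∈ S) => MeasurableSpace.comap (X i) inferInstance) i h)
    · exact le_sup_of_le_right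
        (le_iSup₂ (f := fun i (_ : i ∈ T) => MeasurableSpace.comap (X i) inferInstance) i h)
  · exact sup_le (sigmaGen_mono (Finset.subset_union_left))
      (sigmaGen_mono (Finset.subset_union_right))

lemma sigmaGen_indep (hX : ∀ i, Measurable (X i))
    (hindep : iIndepFun X μ)
    {S T : Finset (Fin n)} (hST : Disjoint S T) :
    Indep (sigmaGen X S) (sigmaGen X T) μ := by
  have h := indep_iSup_of_disjoint
    (m := fun i => MeasurableSpace.comap (X i) inferInstance)
    (fun i => (hX i).comap_le) hindep
    (S := (↑S : Set (Fin n))) (T := (↑T : Set (Fin n)))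
    (Finset.disjoint_coe.2 hST)
  exact h

end SigmaGenLemmas

section HoeffLemmas

variable {Ω : Type*} {n : ℕ} {E : Fin n → Type*} [∀ i, MeasurableSpace (E i)]
  {m0 : MeasurableSpace Ω} {μ : Measure Ω} {X : ∀ i, Ω → E i} {W : Ω → ℝ}
  {J : Finset (Fin n)}

lemma hoeff_eq :
    hoeff μ X W J = fun ω => ∑ L ∈ J.powerset,
      ((-1 : ℝ) ^ (J.card - L.card)) * (μ[W | sigmaGen X L]) ω := by
  funext ω
  simp [hoeff, Finset.sum_apply]

lemma stronglyMeasurable_hoeff :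
    StronglyMeasurable[sigmaGen X J] (hoeff μ X W J) := by
  rw [hoeff_eq]
  refine Finset.stronglyMeasurable_fun_sum _ fun L hL => ?_
  exact stronglyMeasurable_const.mul
    (stronglyMeasurable_condExp.mono (sigmaGen_mono (Finset.mem_powerset.1 hL)))

lemma memL2_hoeff [IsProbabilityMeasure μ] (hX : ∀ i, Measurable (X i))
    (hW : MemLp W 2 μ) : MemLp (hoeff μ X W J) 2 μ := by
  rw [hoeff_eq]
  refine memLp_finset_sum _ fun L _ => ?_
  exact (memL2_condexp (sigmaGen_le hX L) hW).const_mul _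

lemma sum_neg_one_pow_eq_zero {J : Finset (Fin n)} (hJ : J.Nonempty) :
    ∑ L ∈ J.powerset, ((-1 : ℝ)) ^ (J.card - L.card) = 0 := by
  have hterm : ∀ L ∈ J.powerset,
      ((-1 : ℝ)) ^ (J.card - L.card) = (-1) ^ J.card * (-1) ^ L.card := by
    intro L hL
    have hle := Finset.card_le_card (Finset.mem_powerset.1 hL)
    have h1 : ((-1 : ℝ)) ^ (J.card - L.card) * (-1) ^ L.card = (-1) ^ J.card := by
      rw [← pow_add, Nat.sub_add_cancel hle]
    have h2 : ((-1 : ℝ)) ^ L.card * (-1) ^ L.card = 1 := by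
      rw [← pow_add]; exact Even.neg_one_pow ⟨L.card, rfl⟩
    linear_combination ((-1 : ℝ)) ^ L.card * h1 - ((-1 : ℝ)) ^ (J.card - L.card) * h2
  rw [Finset.sum_congr rfl hterm, ← Finset.mul_sum]
  have h0 : ∑ L ∈ J.powerset, ((-1 : ℝ)) ^ L.card = 0 := by
    have hz := Finset.sum_powerset_neg_one_pow_card_of_nonempty (x := J) hJ
    calc ∑ L ∈ J.powerset, ((-1 : ℝ)) ^ L.card
        = ((∑ L ∈ J.powerset, (-1 : ℤ) ^ L.card : ℤ) : ℝ) := by push_cast; rfl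
      _ = 0 := by rw [hz]; simp
  rw [h0, mul_zero]

lemma integral_hoeff_eq_zero [IsProbabilityMeasure μ] (hX : ∀ i, Measurable (X i))
    (hJ : J.Nonempty) : ∫ ω, hoeff μ X W J ω ∂μ = 0 := by
  rw [hoeff_eq]
  rw [integral_finset_sum _ (fun L _ => integrable_condExp.const_mul _)]
  have hterm : ∀ L ∈ J.powerset,
      ∫ ω, ((-1 : ℝ) ^ (J.card - L.card)) * (μ[W | sigmaGen X L]) ω ∂μ
        = ((-1 : ℝ) ^ (J.card - L.card)) * ∫ ω, W ω ∂μ := by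
    intro L _
    rw [integral_const_mul, integral_condExp (sigmaGen_le hX L)]
  rw [Finset.sum_congr rfl hterm, ← Finset.sum_mul, sum_neg_one_pow_eq_zero hJ, zero_mul]

end HoeffLemmas

/-! ### Main theorem -/

theorem sq_condexp_product_le
    {Ω : Type*} [m0 : MeasurableSpace Ω] (μ : Measure Ω) [IsProbabilityMeasure μ]
    {n : ℕ} {E : Fin n → Type*} [∀ i, MeasurableSpace (E i)]
    (X : ∀ i, Ω → E i) (hX : ∀ i, Measurable (X i))
    (hindep : iIndepFun X μ)
    (pi pk : ℕ) (hpi : 1 ≤ pi) (hpin : pi ≤ n) (hpk : 1 ≤ pk) (hpkn : pk ≤ n)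
    (Wi Wk : Ω → ℝ) (hWi4 : MemLp Wi 4 μ) (hWk4 : MemLp Wk 4 μ)
    (hdegi : IsDegenUStat μ X Wi pi) (hdegk : IsDegenUStat μ X Wk pk)
    (J K : Finset (Fin n)) (hJ : J ∈ DD n pi) (hK : K ∈ DD n pk) :
    ∫ ω, ((μ[(fun ω' => hoeff μ X Wi J ω' * hoeff μ X Wk K ω') |
          sigmaGen X ((J \ K) ∪ (K \ J))]) ω) ^ 2 ∂μ ≤
      variance (hoeff μ X Wi J) μ * variance (hoeff μ X Wk K) μ := by
  classical
  have hJcard : J.card = pi := (Finset.mem_filter.1 hJ).2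
  have hKcard : K.card = pk := (Finset.mem_filter.1 hK).2
  have hJne : J.Nonempty := Finset.card_pos.1 (by omega)
  have hKne : K.Nonempty := Finset.card_pos.1 (by omega)
  have hWi2 : MemLp Wi 2 μ := hWi4.mono_exponent (by norm_num)
  have hWk2 : MemLp Wk 2 μ := hWk4.mono_exponent (by norm_num)
  have hf2 : MemLp (hoeff μ X Wi J) 2 μ := memL2_hoeff hX hWi2
  have hg2 : MemLp (hoeff μ X Wk K) 2 μ := memL2_hoeff hX hWk2
  have hfm : StronglyMeasurable[sigmaGen X J] (hoeff μ X Wi J) := stronglyMeasurable_hoeff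
  have hgm : StronglyMeasurable[sigmaGen X K] (hoeff μ X Wk K) := stronglyMeasurable_hoeff
  have hfsqm : StronglyMeasurable[sigmaGen X J] (fun ω => hoeff μ X Wi J ω ^ 2) := by
    simpa [pow_two, Pi.mul_def] using hfm.mul hfm
  have hgsqm : StronglyMeasurable[sigmaGen X K] (fun ω => hoeff μ X Wk K ω ^ 2) := by
    simpa [pow_two, Pi.mul_def] using hgm.mul hgm
  have hBC : sigmaGen X ((J \ K) ∪ (K \ J)) = sigmaGen X (J \ K) ⊔ sigmaGen X (K \ J) :=
    sigmaGen_union _ _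
  -- drop the independent part of the conditioning σ-algebra
  have hU : μ[(fun ω => hoeff μ X Wi J ω ^ 2)|sigmaGen X ((J \ K) ∪ (K \ J))] =ᵐ[μ]
      μ[(fun ω => hoeff μ X Wi J ω ^ 2)|sigmaGen X (J \ K)] := by
    have h2 : sigmaGen X ((J \ K) ∪ (K \ J))
        = sigmaGen X (K \ J) ⊔ sigmaGen X (J \ K) := by rw [hBC, sup_comm]
    rw [h2]
    exact condexp_sup_eq (sigmaGen_le hX J) (sigmaGen_le hX (K \ J))
      (sigmaGen_mono Finset.sdiff_subset)
      (sigmaGen_indep hX hindep Finset.disjoint_sdiff)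
      hfsqm hf2.integrable_sq
  have hV : μ[(fun ω => hoeff μ X Wk K ω ^ 2)|sigmaGen X ((J \ K) ∪ (K \ J))] =ᵐ[μ]
      μ[(fun ω => hoeff μ X Wk K ω ^ 2)|sigmaGen X (K \ J)] := by
    rw [hBC]
    exact condexp_sup_eq (sigmaGen_le hX K) (sigmaGen_le hX (J \ K))
      (sigmaGen_mono Finset.sdiff_subset)
      (sigmaGen_indep hX hindep Finset.disjoint_sdiff)
      hgsqm hg2.integrable_sq
  have hCS := condexp_mul_sq_le (m := sigmaGen X ((J \ K) ∪ (K \ J))) (μ := μ) hf2 hg2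
  -- independence of the two remaining conditional expectations
  have hIndepUV : IndepFun (μ[(fun ω => hoeff μ X Wi J ω ^ 2)|sigmaGen X (J \ K)])
      (μ[(fun ω => hoeff μ X Wk K ω ^ 2)|sigmaGen X (K \ J)]) μ := by
    have h := sigmaGen_indep (μ := μ) hX hindep
      (disjoint_sdiff_sdiff : Disjoint (J \ K) (K \ J))
    exact indep_of_indep_of_le_right
      (indep_of_indep_of_le_left h stronglyMeasurable_condExp.measurable.comap_le)
      stronglyMeasurable_condExp.measurable.comap_le
  have hUint : Integrable (μ[(fun ω => hoeff μ X Wi J ω ^ 2)|sigmaGen X (J \ K)]) μ :=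
    integrable_condExp
  have hVint : Integrable (μ[(fun ω => hoeff μ X Wk K ω ^ 2)|sigmaGen X (K \ J)]) μ :=
    integrable_condExp
  have hprod_int : Integrable (fun ω =>
      (μ[(fun ω => hoeff μ X Wi J ω ^ 2)|sigmaGen X (J \ K)]) ω *
      (μ[(fun ω => hoeff μ X Wk K ω ^ 2)|sigmaGen X (K \ J)]) ω) μ := by
    simpa [Pi.mul_apply, Pi.mul_def] using hIndepUV.integrable_mul hUint hVint
  calc ∫ ω, ((μ[(fun ω' => hoeff μ X Wi J ω' * hoeff μ X Wk K ω') |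
          sigmaGen X ((J \ K) ∪ (K \ J))]) ω) ^ 2 ∂μ
      ≤ ∫ ω, (μ[(fun ω => hoeff μ X Wi J ω ^ 2)|sigmaGen X (J \ K)]) ω *
          (μ[(fun ω => hoeff μ X Wk K ω ^ 2)|sigmaGen X (K \ J)]) ω ∂μ := by
        refine integral_mono_of_nonneg (Eventually.of_forall fun ω => sq_nonneg _)
          hprod_int ?_
        filter_upwards [hCS, hU, hV] with ω h1 h2 h3
        rw [← h2, ← h3]
        exact h1
    _ = (∫ ω, (μ[(fun ω => hoeff μ X Wi J ω ^ 2)|sigmaGen X (J \ K)]) ω ∂μ) *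
        (∫ ω, (μ[(fun ω => hoeff μ X Wk K ω ^ 2)|sigmaGen X (K \ J)]) ω ∂μ) := by
        simpa [Pi.mul_apply] using hIndepUV.integral_mul_eq_mul_integral hUint.aestronglyMeasurable hVint.aestronglyMeasurable
    _ = (∫ ω, hoeff μ X Wi J ω ^ 2 ∂μ) * (∫ ω, hoeff μ X Wk K ω ^ 2 ∂μ) := by
        rw [integral_condExp (sigmaGen_le hX (J \ K)),
          integral_condExp (sigmaGen_le hX (K \ J))]
    _ = variance (hoeff μ X Wi J) μ * variance (hoeff μ X Wk K) μ := by
        rw [variance_eq_sub hf2, variance_eq_sub hg2,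
          integral_hoeff_eq_zero hX hJne, integral_hoeff_eq_zero hX hKne]
        simp only [Pi.pow_apply]
        ring

end
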